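/- arXiv:2305.02894 — 2 statements merged into one kernel-verified Lean document; each statement's English description precedes it below -/
import Mathlib

section
/- Let d ∈ ℕ, α > 0, and let L : ℝ^d → ℝ be bounded below with infimum L̲ := inf L and satisfy the local Lipschitz estimate |L(θ) − L(θ̂)| ≤ M_L (|θ| + |θ̂|)|θ − θ̂| for all θ, θ̂ ∈ ℝ^d, for some M_L > 0. Then the map h(θ) := θ e^{−α L(θ)} satisfies, for all θ, θ̂ ∈ ℝ^d, |h(θ) − h(θ̂)| ≤ e^{−α L̲}|θ − θ̂| + α e^{−α L̲} M_L |θ̂| (|θ| + |θ̂|)|θ − θ̂|. -/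
open MeasureTheory Real Set

lemma exp_abs_sub_le (a b c : ℝ) (ha : a ≤ c) (hb : b ≤ c) :
    |Real.exp a - Real.exp b| ≤ Real.exp c * |a - b| := by
  wlog h : b ≤ a generalizing a b
  · have := this b a hb ha (le_of_not_ge h)
    rwa [abs_sub_comm (Real.exp b), abs_sub_comm b a] at this
  rw [abs_of_nonneg (sub_nonneg.2 (Real.exp_le_exp.2 h)),
    abs_of_nonneg (sub_nonneg.2 h)]
  have h1 : Real.exp a - Real.exp b ≤ (a - b) * Real.exp a := by
    have h0 := Real.add_one_le_exp (b - a)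
    have hpos := Real.exp_pos a
    have h2 : Real.exp (b - a) * Real.exp a = Real.exp b := by
      rw [← Real.exp_add]; ring_nf
    nlinarith [Real.exp_pos b]
  calc Real.exp a - Real.exp b ≤ (a - b) * Real.exp a := h1
    _ ≤ Real.exp c * (a - b) := by
        rw [mul_comm]
        exact mul_le_mul_of_nonneg_right (Real.exp_le_exp.2 ha) (sub_nonneg.2 h)

/-- if `L` is bounded below with infimum `L̲` and locally Lipschitz in the sense
`|L(θ) - L(θ̂)| ≤ M_L (|θ| + |θ̂|)|θ - θ̂|`, then `h(θ) := θ e^{-α L(θ)}` satisfies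
`|h(θ) - h(θ̂)| ≤ e^{-α L̲}|θ - θ̂| + α e^{-α L̲} M_L |θ̂| (|θ| + |θ̂|) |θ - θ̂|`. -/
theorem weighted_identity_locally_lipschitz {d : ℕ} (α ML : ℝ)
    (hα : 0 < α) (hML : 0 < ML)
    (L : EuclideanSpace ℝ (Fin d) → ℝ)
    (hbddBelow : BddBelow (Set.range L))
    (hlip : ∀ θ θ' : EuclideanSpace ℝ (Fin d),
      |L θ - L θ'| ≤ ML * (‖θ‖ + ‖θ'‖) * ‖θ - θ'‖) :
    ∀ θ θ' : EuclideanSpace ℝ (Fin d),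
      ‖Real.exp (-α * L θ) • θ - Real.exp (-α * L θ') • θ'‖ ≤
        Real.exp (-α * sInf (Set.range L)) * ‖θ - θ'‖ +
          α * Real.exp (-α * sInf (Set.range L)) * ML * ‖θ'‖ * (‖θ‖ + ‖θ'‖) * ‖θ - θ'‖ := by
  intro θ θ'
  set I := sInf (Set.range L) with hI
  have hle : ∀ x, I ≤ L x := fun x => csInf_le hbddBelow ⟨x, rfl⟩
  have hexp : ∀ x, -α * L x ≤ -α * I := fun x => by nlinarith [hle x]
  have hsplit : Real.exp (-α * L θ) • θ - Real.exp (-α * L θ') • θ' =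
      Real.exp (-α * L θ) • (θ - θ') + (Real.exp (-α * L θ) - Real.exp (-α * L θ')) • θ' := by
    module
  rw [hsplit]
  refine (norm_add_le _ _).trans ?_
  rw [norm_smul, norm_smul, Real.norm_eq_abs, Real.norm_eq_abs,
    abs_of_pos (Real.exp_pos _)]
  have h1 : Real.exp (-α * L θ) * ‖θ - θ'‖ ≤ Real.exp (-α * I) * ‖θ - θ'‖ :=
    mul_le_mul_of_nonneg_right (Real.exp_le_exp.2 (hexp θ)) (norm_nonneg _)
  have h2 : |Real.exp (-α * L θ) - Real.exp (-α * L θ')| ≤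
      Real.exp (-α * I) * (α * (ML * (‖θ‖ + ‖θ'‖) * ‖θ - θ'‖)) := by
    refine (exp_abs_sub_le _ _ _ (hexp θ) (hexp θ')).trans ?_
    rw [show (-α * L θ) - (-α * L θ') = α * (L θ' - L θ) by ring, abs_mul,
      abs_of_pos hα, abs_sub_comm]
    exact mul_le_mul_of_nonneg_left
      (mul_le_mul_of_nonneg_left (hlip θ θ') hα.le) (Real.exp_pos _).le
  have h3 : |Real.exp (-α * L θ) - Real.exp (-α * L θ')| * ‖θ'‖ ≤
      α * Real.exp (-α * I) * ML * ‖θ'‖ * (‖θ‖ + ‖θ'‖) * ‖θ - θ'‖ := by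
    calc |Real.exp (-α * L θ) - Real.exp (-α * L θ')| * ‖θ'‖
        ≤ Real.exp (-α * I) * (α * (ML * (‖θ‖ + ‖θ'‖) * ‖θ - θ'‖)) * ‖θ'‖ :=
          mul_le_mul_of_nonneg_right h2 (norm_nonneg _)
      _ = α * Real.exp (-α * I) * ML * ‖θ'‖ * (‖θ‖ + ‖θ'‖) * ‖θ - θ'‖ := by ring
  linarith
end

section
/- Let d ∈ ℕ, T > 0, α > 0, K > 0, and for k = 1, 2 let L_k : ℝ^d → ℝ satisfy Assumption 1 and be bounded above with supremum L̄_k := sup L_k. Let ν¹, ν² : [0, T] → P₂(ℝ^d) be continuous curves of Borel probability measures with sup_{t ∈ [0,T]} ∫ |θ|⁴ dν_t¹ ≤ K and sup_{t ∈ [0,T]} ∫ |θ|⁴ dν_t² ≤ K. Let w₁, w₂ > 0 with w₁ + w₂ = 1, and set ν_t := w₁ ν_t¹ + w₂ ν_t². Then there exists a constant C > 0, depending only on α, K, and the constants M_{L_k}, C_{L_k}, L̄_k, L̲_k of L₁ and L₂, such that for all s, t ∈ (0, T) and k = 1, 2: |m_{L_k}^α[ν_t] − m_{L_k}^α[ν_s]|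 ≤ C (w₁ W₂(ν_t¹, ν_s¹) + w₂ W₂(ν_t², ν_s²)). -/
open MeasureTheory Real Set
open Filter
set_option maxHeartbeats 1000000

/-- The consensus point `m_L^α[ρ] = (∫ θ e^{-αL(θ)} dρ) / (∫ e^{-αL(θ)} dρ)`. -/
noncomputable def consensusPoint {d : ℕ} (α : ℝ) (L : EuclideanSpace ℝ (Fin d) → ℝ)
    (ρ : Measure (EuclideanSpace ℝ (Fin d))) : EuclideanSpace ℝ (Fin d) :=
  (∫ θ, Real.exp (-α * L θ) ∂ρ)⁻¹ • ∫ θ, Real.exp (-α * L θ) • θ ∂ρ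

/-- The 2-Wasserstein distance between two Borel probability measures on `ℝ^d`:
the infimum over couplings `π` of `(∬ |θ - θ̂|² dπ)^{1/2}`. -/
noncomputable def W2 {d : ℕ} (μ ν : Measure (EuclideanSpace ℝ (Fin d))) : ℝ :=
  sInf {c : ℝ | ∃ pl : Measure (EuclideanSpace ℝ (Fin d) × EuclideanSpace ℝ (Fin d)),
    IsProbabilityMeasure pl ∧ pl.map Prod.fst = μ ∧ pl.map Prod.snd = ν ∧
    c = (∫ p, ‖p.1 - p.2‖ ^ 2 ∂pl) ^ (1/2 : ℝ)}

/-- Assumption 1 of the paper for a loss function `L` with constants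
`M_L, C_L, M_{∇L}, C_{∇L}`. -/
structure Assumption1 {d : ℕ} (L : EuclideanSpace ℝ (Fin d) → ℝ)
    (ML CL MgL CgL : ℝ) : Prop where
  ML_pos : 0 < ML
  CL_pos : 0 < CL
  MgL_pos : 0 < MgL
  CgL_pos : 0 < CgL
  bddBelow : BddBelow (Set.range L)
  differentiable : Differentiable ℝ L
  locLip : ∀ θ θ' : EuclideanSpace ℝ (Fin d),
    |L θ - L θ'| ≤ ML * (‖θ‖ + ‖θ'‖) * ‖θ - θ'‖
  quadGrowth : ∀ θ : EuclideanSpace ℝ (Fin d),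
    L θ - sInf (Set.range L) ≤ CL * (1 + ‖θ‖ ^ 2)
  gradLip : ∀ θ θ' : EuclideanSpace ℝ (Fin d),
    ‖gradient L θ - gradient L θ'‖ ≤ MgL * ‖θ - θ'‖
  gradBdd : ∀ θ : EuclideanSpace ℝ (Fin d), ‖gradient L θ‖ ≤ CgL

/-- The mixture `w₁ ν¹ + w₂ ν²` of two (curves of) measures. -/
noncomputable def mix2 {d : ℕ} (w : Fin 2 → ℝ)
    (ν : Fin 2 → ℝ → Measure (EuclideanSpace ℝ (Fin d))) (t : ℝ) :
    Measure (EuclideanSpace ℝ (Fin d)) :=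
  ENNReal.ofReal (w 0) • ν 0 t + ENNReal.ofReal (w 1) • ν 1 t

variable {d : ℕ}
local notation "E" => EuclideanSpace ℝ (Fin d)

private lemma exp_lip {u v c : ℝ} (hu : u ≤ c) (hv : v ≤ c) :
    |Real.exp u - Real.exp v| ≤ Real.exp c * |u - v| := by
  wlog h : v ≤ u generalizing u v
  · rw [abs_sub_comm, abs_sub_comm u v]; exact this hv hu (le_of_not_ge h)
  rw [abs_of_nonneg (sub_nonneg.2 (Real.exp_le_exp.2 h)), abs_of_nonneg (sub_nonneg.2 h)]
  have h1 := Real.add_one_le_exp (v - u)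
  have h2 : Real.exp (v - u) * Real.exp u = Real.exp v := by
    rw [← Real.exp_add]; ring_nf
  have h3 : Real.exp u ≤ Real.exp c := Real.exp_le_exp.2 hu
  nlinarith [Real.exp_pos u, mul_le_mul_of_nonneg_right h1 (Real.exp_pos u).le,
    mul_le_mul_of_nonneg_left h3 (sub_nonneg.2 h)]


private lemma integrable_of_bdd {X : Type*} [MeasurableSpace X] {μ : Measure X}
    [IsFiniteMeasure μ] {f : X → ℝ} (hm : AEStronglyMeasurable f μ)
    {C : ℝ} (hC : ∀ x, ‖f x‖ ≤ C) : Integrable f μ :=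
  (integrable_const C).mono' hm (Eventually.of_forall hC)

private lemma integral_fst_eq {μ : Measure E} {pl : Measure (E × E)}
    (hpl : pl.map Prod.fst = μ) {G : Type*} [NormedAddCommGroup G] [NormedSpace ℝ G]
    {f : E → G} (hf : AEStronglyMeasurable f μ) :
    ∫ θ, f θ ∂μ = ∫ p, f p.1 ∂pl := by
  rw [← hpl] at hf ⊢
  exact integral_map measurable_fst.aemeasurable hf

private lemma integral_snd_eq {μ : Measure E} {pl : Measure (E × E)}
    (hpl : pl.map Prod.snd = μ) {G : Type*} [NormedAddCommGroup G] [NormedSpace ℝ G]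
    {f : E → G} (hf : AEStronglyMeasurable f μ) :
    ∫ θ, f θ ∂μ = ∫ p, f p.2 ∂pl := by
  rw [← hpl] at hf ⊢
  exact integral_map measurable_snd.aemeasurable hf

private lemma integrable_fst_comp {μ : Measure E} {pl : Measure (E × E)}
    (hpl : pl.map Prod.fst = μ) {G : Type*} [NormedAddCommGroup G]
    {f : E → G} (hf : AEStronglyMeasurable f μ) (hi : Integrable f μ) :
    Integrable (fun p : E × E => f p.1) pl := by
  rw [← hpl] at hf hi
  exact (integrable_map_measure hf measurable_fst.aemeasurable).mp hi

private lemma integrable_snd_comp {μ : Measure E} {pl : Measure (E × E)}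
    (hpl : pl.map Prod.snd = μ) {G : Type*} [NormedAddCommGroup G]
    {f : E → G} (hf : AEStronglyMeasurable f μ) (hi : Integrable f μ) :
    Integrable (fun p : E × E => f p.2) pl := by
  rw [← hpl] at hf hi
  exact (integrable_map_measure hf measurable_snd.aemeasurable).mp hi

private lemma le_one_add_pow4 {x : ℝ} (hx : 0 ≤ x) : x ≤ 1 + x ^ 4 := by
  nlinarith [sq_nonneg (x ^ 2 - 1), sq_nonneg (x - 1), sq_nonneg (x ^ 2 - x), sq_nonneg (x + 1)]

private lemma sq_le_one_add_pow4 {x : ℝ} : x ^ 2 ≤ 1 + x ^ 4 := by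
  nlinarith [sq_nonneg (x ^ 2 - 1)]

private lemma integral_cs {X : Type*} [MeasurableSpace X] {μ : Measure X}
    {f g : X → ℝ} (hf0 : ∀ x, 0 ≤ f x) (hg0 : ∀ x, 0 ≤ g x)
    (hfm : AEStronglyMeasurable f μ) (hgm : AEStronglyMeasurable g μ)
    (hf2 : Integrable (fun x => f x ^ 2) μ) (hg2 : Integrable (fun x => g x ^ 2) μ) :
    ∫ x, f x * g x ∂μ ≤ (∫ x, f x ^ 2 ∂μ) ^ (1/2:ℝ) * (∫ x, g x ^ 2 ∂μ) ^ (1/2:ℝ) := by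
  have hpq : Real.HolderConjugate 2 2 := Real.holderConjugate_iff.mpr ⟨one_lt_two, by norm_num⟩
  have hf : MemLp f (ENNReal.ofReal 2) μ := by
    rw [show ENNReal.ofReal 2 = 2 by norm_num]
    exact (memLp_two_iff_integrable_sq hfm).2 hf2
  have hg : MemLp g (ENNReal.ofReal 2) μ := by
    rw [show ENNReal.ofReal 2 = 2 by norm_num]
    exact (memLp_two_iff_integrable_sq hgm).2 hg2
  have := MeasureTheory.integral_mul_le_Lp_mul_Lq_of_nonneg hpq
    (Eventually.of_forall hf0) (Eventually.of_forall hg0) hf hg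
  have h2 : ∀ y : ℝ, y ^ (2:ℝ) = y ^ 2 := fun y => by
    rw [show (2:ℝ) = ((2:ℕ):ℝ) by norm_num, Real.rpow_natCast]
  simpa [h2] using this

private lemma coupling_est {α M el eu K : ℝ} (hα : 0 < α) (hM : 0 < M) (hel : 0 < el)
    (hK : 0 < K) {L : E → ℝ} (hLc : Continuous L)
    (hlow : ∀ θ : E, el ≤ Real.exp (-α * L θ)) (hup : ∀ θ : E, Real.exp (-α * L θ) ≤ eu)
    (hlip : ∀ x y : E, |Real.exp (-α * L x) - Real.exp (-α * L y)| ≤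
      α * eu * M * ((‖x‖ + ‖y‖) * ‖x - y‖))
    {μ μ' : Measure E} [IsProbabilityMeasure μ] [IsProbabilityMeasure μ']
    (hi : Integrable (fun θ : E => ‖θ‖ ^ 4) μ) (hk : ∫ θ : E, ‖θ‖ ^ 4 ∂μ ≤ K)
    (hi' : Integrable (fun θ : E => ‖θ‖ ^ 4) μ') (hk' : ∫ θ : E, ‖θ‖ ^ 4 ∂μ' ≤ K)
    {pl : Measure (E × E)} [IsProbabilityMeasure pl]
    (hplf : pl.map Prod.fst = μ) (hpls : pl.map Prod.snd = μ') :
    |∫ θ : E, Real.exp (-α * L θ) ∂μ - ∫ θ : E, Real.exp (-α * L θ) ∂μ'| ≤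
      Real.sqrt (2*eu^2 + 24*(α*eu*M)^2*(1+2*K)) * (∫ p, ‖p.1 - p.2‖ ^ 2 ∂pl) ^ (1/2:ℝ) ∧
    ‖∫ θ : E, Real.exp (-α * L θ) • θ ∂μ - ∫ θ : E, Real.exp (-α * L θ) • θ ∂μ'‖ ≤
      Real.sqrt (2*eu^2 + 24*(α*eu*M)^2*(1+2*K)) * (∫ p, ‖p.1 - p.2‖ ^ 2 ∂pl) ^ (1/2:ℝ) := by
  set ee : E → ℝ := fun θ => Real.exp (-α * L θ) with hee
  have heu : 0 < eu := (hel.trans_le (hlow 0)).trans_le (hup 0)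
  set B : ℝ := α * eu * M with hB
  have hBpos : 0 < B := by positivity
  set g : E × E → ℝ := fun p => eu + 2 * B * (1 + ‖p.1‖ ^ 2 + ‖p.2‖ ^ 2) with hg
  set h : E × E → ℝ := fun p => ‖p.1 - p.2‖ with hh
  have hg0 : ∀ p, 0 ≤ g p := fun p => by positivity
  have hh0 : ∀ p, 0 ≤ h p := fun p => norm_nonneg _
  have heec : Continuous ee := Real.continuous_exp.comp (continuous_const.mul hLc)
  have hgc : Continuous g := by fun_prop
  have hhc : Continuous h := by fun_prop
  -- moments of the coupling
  have hn4c : Continuous (fun θ : E => ‖θ‖ ^ 4) := by fun_prop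
  have ha4 : Integrable (fun p : E × E => ‖p.1‖ ^ 4) pl :=
    integrable_fst_comp hplf hn4c.aestronglyMeasurable hi
  have hb4 : Integrable (fun p : E × E => ‖p.2‖ ^ 4) pl :=
    integrable_snd_comp hpls hn4c.aestronglyMeasurable hi'
  have ha4K : ∫ p, ‖p.1‖ ^ 4 ∂pl ≤ K := by
    rw [← integral_fst_eq hplf hn4c.aestronglyMeasurable]; exact hk
  have hb4K : ∫ p, ‖p.2‖ ^ 4 ∂pl ≤ K := by
    rw [← integral_snd_eq hpls hn4c.aestronglyMeasurable]; exact hk'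
  -- integrability of g², h², g*h
  have hg2sq : ∀ p : E × E, g p ^ 2 ≤ 2*eu^2 + 24*B^2 * (1 + ‖p.1‖ ^ 4 + ‖p.2‖ ^ 4) := by
    intro p
    have ha := norm_nonneg p.1
    have hb := norm_nonneg p.2
    have hs : (1+‖p.1‖^2+‖p.2‖^2)^2 ≤ 3*(1+‖p.1‖^4+‖p.2‖^4) := by
      nlinarith [sq_nonneg (‖p.1‖^2-1), sq_nonneg (‖p.2‖^2-1), sq_nonneg (‖p.1‖^2-‖p.2‖^2)]
    have h2 : 8*B^2*(1+‖p.1‖^2+‖p.2‖^2)^2 ≤ 24*B^2*(1+‖p.1‖^4+‖p.2‖^4) := by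
      have := mul_le_mul_of_nonneg_left hs (by positivity : (0:ℝ) ≤ 8*B^2)
      linarith
    have h3 := sq_nonneg (eu - 2*B*(1+‖p.1‖^2+‖p.2‖^2))
    show (eu + 2*B*(1+‖p.1‖^2+‖p.2‖^2))^2 ≤ _
    nlinarith [h2, h3]
  have hbnd : Integrable (fun p : E × E => 2*eu^2 + 24*B^2 * (1 + ‖p.1‖ ^ 4 + ‖p.2‖ ^ 4)) pl := by
    apply Integrable.add (integrable_const _)
    exact (((integrable_const (1:ℝ)).add ha4).add hb4).const_mul _
  have hg2 : Integrable (fun p : E × E => g p ^ 2) pl := by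
    refine Integrable.mono' hbnd (hgc.pow 2).aestronglyMeasurable
      (Eventually.of_forall fun p => ?_)
    rw [Real.norm_of_nonneg (by positivity)]
    exact hg2sq p
  have hh2sq : ∀ p : E × E, h p ^ 2 ≤ 4 + 2 * ‖p.1‖ ^ 4 + 2 * ‖p.2‖ ^ 4 := by
    intro p
    have h1 : h p ≤ ‖p.1‖ + ‖p.2‖ := norm_sub_le _ _
    have h2 : h p ^ 2 ≤ (‖p.1‖ + ‖p.2‖) ^ 2 := pow_le_pow_left₀ (hh0 p) h1 2
    nlinarith [sq_le_one_add_pow4 (x := ‖p.1‖), sq_le_one_add_pow4 (x := ‖p.2‖),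
      sq_nonneg (‖p.1‖ - ‖p.2‖)]
  have hh2 : Integrable (fun p : E × E => h p ^ 2) pl := by
    refine Integrable.mono' (((integrable_const (4:ℝ)).add (ha4.const_mul 2)).add
      (hb4.const_mul 2)) (hhc.pow 2).aestronglyMeasurable (Eventually.of_forall fun p => ?_)
    rw [Real.norm_of_nonneg (by positivity)]
    simpa [add_assoc] using hh2sq p
  have hgh : Integrable (fun p : E × E => g p * h p) pl := by
    refine Integrable.mono' ((hg2.add hh2).const_mul (1/2 : ℝ)) (hgc.mul hhc).aestronglyMeasurable
      (Eventually.of_forall fun p => ?_)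
    rw [Real.norm_of_nonneg (mul_nonneg (hg0 p) (hh0 p))]
    show g p * h p ≤ 1/2 * (g p ^ 2 + h p ^ 2)
    have aux : ∀ x y : ℝ, x * y ≤ 1/2 * (x ^ 2 + y ^ 2) := fun x y => by nlinarith [sq_nonneg (x - y)]
    exact aux _ _
  -- bound on ∫ g²
  have hgK : ∫ p, g p ^ 2 ∂pl ≤ 2*eu^2 + 24*B^2*(1+2*K) := by
    have hmono := integral_mono hg2 hbnd hg2sq
    have i1 : Integrable (fun p : E × E => (1:ℝ) + ‖p.1‖ ^ 4 + ‖p.2‖ ^ 4) pl :=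
      ((integrable_const 1).add ha4).add hb4
    have e1 : ∫ p, ((1:ℝ) + ‖p.1‖ ^ 4 + ‖p.2‖ ^ 4) ∂pl
        = 1 + ∫ p, ‖p.1‖ ^ 4 ∂pl + ∫ p, ‖p.2‖ ^ 4 ∂pl := by
      rw [integral_add (show Integrable (fun p : E × E => (1:ℝ) + ‖p.1‖ ^ 4) pl from
          (integrable_const 1).add ha4) hb4,
        integral_add (integrable_const (1:ℝ)) ha4, integral_const]
      simp [measure_univ]
    have hcomp : ∫ p, (2*eu^2 + 24*B^2 * (1 + ‖p.1‖ ^ 4 + ‖p.2‖ ^ 4)) ∂pl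
        = 2*eu^2 + 24*B^2 * (1 + ∫ p, ‖p.1‖ ^ 4 ∂pl + ∫ p, ‖p.2‖ ^ 4 ∂pl) := by
      rw [integral_add (integrable_const (2*eu^2)) (i1.const_mul (24*B^2))]
      simp only [integral_const_mul, e1, integral_const, measure_univ, probReal_univ, ENNReal.toReal_one,
        smul_eq_mul, one_mul]
    rw [hcomp] at hmono
    nlinarith [ha4K, hb4K, sq_nonneg B]
  -- Cauchy–Schwarz
  have hDfull : ∫ p, g p * h p ∂pl ≤
      Real.sqrt (2*eu^2 + 24*B^2*(1+2*K)) * (∫ p, h p ^ 2 ∂pl) ^ (1/2:ℝ) := by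
    have hcs := integral_cs hg0 hh0 hgc.aestronglyMeasurable hhc.aestronglyMeasurable hg2 hh2
    have h1 : (∫ p, g p ^ 2 ∂pl) ^ (1/2:ℝ) ≤ Real.sqrt (2*eu^2 + 24*B^2*(1+2*K)) := by
      rw [← Real.sqrt_eq_rpow]
      exact Real.sqrt_le_sqrt hgK
    have h2 : (0:ℝ) ≤ (∫ p, h p ^ 2 ∂pl) ^ (1/2:ℝ) :=
      Real.rpow_nonneg (integral_nonneg fun p => sq_nonneg _) _
    calc ∫ p, g p * h p ∂pl ≤ (∫ p, g p ^ 2 ∂pl) ^ (1/2:ℝ) * (∫ p, h p ^ 2 ∂pl) ^ (1/2:ℝ) := hcs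
      _ ≤ Real.sqrt (2*eu^2 + 24*B^2*(1+2*K)) * (∫ p, h p ^ 2 ∂pl) ^ (1/2:ℝ) :=
        mul_le_mul_of_nonneg_right h1 h2
  -- integrability of the exponential weights
  have heeμ : Integrable ee μ := integrable_of_bdd heec.aestronglyMeasurable
    (C := eu) (fun θ => by rw [Real.norm_of_nonneg (Real.exp_pos _).le]; exact hup θ)
  have heeμ' : Integrable ee μ' := integrable_of_bdd heec.aestronglyMeasurable
    (C := eu) (fun θ => by rw [Real.norm_of_nonneg (Real.exp_pos _).le]; exact hup θ)
  have hee1 : Integrable (fun p : E × E => ee p.1) pl :=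
    integrable_fst_comp hplf heec.aestronglyMeasurable heeμ
  have hee2 : Integrable (fun p : E × E => ee p.2) pl :=
    integrable_snd_comp hpls heec.aestronglyMeasurable heeμ'
  have heevc : Continuous (fun θ : E => ee θ • θ) := heec.smul continuous_id
  have hvint : Integrable (fun θ : E => ee θ • θ) μ := by
    refine Integrable.mono' (((integrable_const (1:ℝ)).add hi).const_mul eu)
      heevc.aestronglyMeasurable (Eventually.of_forall fun θ => ?_)
    rw [norm_smul, Real.norm_of_nonneg (Real.exp_pos _).le]
    calc ee θ * ‖θ‖ ≤ eu * ‖θ‖ := mul_le_mul_of_nonneg_right (hup θ) (norm_nonneg θ)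
      _ ≤ eu * (1 + ‖θ‖^4) := mul_le_mul_of_nonneg_left (le_one_add_pow4 (norm_nonneg θ)) heu.le
  have hvint' : Integrable (fun θ : E => ee θ • θ) μ' := by
    refine Integrable.mono' (((integrable_const (1:ℝ)).add hi').const_mul eu)
      heevc.aestronglyMeasurable (Eventually.of_forall fun θ => ?_)
    rw [norm_smul, Real.norm_of_nonneg (Real.exp_pos _).le]
    calc ee θ * ‖θ‖ ≤ eu * ‖θ‖ := mul_le_mul_of_nonneg_right (hup θ) (norm_nonneg θ)
      _ ≤ eu * (1 + ‖θ‖^4) := mul_le_mul_of_nonneg_left (le_one_add_pow4 (norm_nonneg θ)) heu.le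
  have hv1 : Integrable (fun p : E × E => ee p.1 • p.1) pl :=
    integrable_fst_comp hplf heevc.aestronglyMeasurable hvint
  have hv2 : Integrable (fun p : E × E => ee p.2 • p.2) pl :=
    integrable_snd_comp hpls heevc.aestronglyMeasurable hvint'
  constructor
  · -- scalar part
    have hEdiff : ∫ θ : E, ee θ ∂μ - ∫ θ : E, ee θ ∂μ' = ∫ p, (ee p.1 - ee p.2) ∂pl := by
      rw [integral_fst_eq hplf heec.aestronglyMeasurable,
        integral_snd_eq hpls heec.aestronglyMeasurable, ← integral_sub hee1 hee2]
    rw [hEdiff]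
    calc |∫ p, (ee p.1 - ee p.2) ∂pl| ≤ ∫ p, |ee p.1 - ee p.2| ∂pl := by
          simpa [Real.norm_eq_abs] using
            norm_integral_le_integral_norm (μ := pl) (fun p : E × E => ee p.1 - ee p.2)
      _ ≤ ∫ p, g p * h p ∂pl := by
          refine integral_mono (hee1.sub hee2).abs hgh fun p => ?_
          have hab : ‖p.1‖ + ‖p.2‖ ≤ 2*(1+‖p.1‖^2+‖p.2‖^2) := by
            nlinarith [sq_nonneg (‖p.1‖-1), sq_nonneg (‖p.2‖-1), norm_nonneg p.1, norm_nonneg p.2]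
          have h1 : B * (‖p.1‖ + ‖p.2‖) ≤ g p := by
            have := mul_le_mul_of_nonneg_left hab hBpos.le
            simp only [hg]
            linarith [heu.le]
          calc |ee p.1 - ee p.2| ≤ B * ((‖p.1‖ + ‖p.2‖) * ‖p.1 - p.2‖) := hlip p.1 p.2
            _ = (B * (‖p.1‖ + ‖p.2‖)) * h p := by rw [hh]; ring
            _ ≤ g p * h p := mul_le_mul_of_nonneg_right h1 (hh0 p)
      _ ≤ _ := hDfull
  · -- vector part
    have hVdiff : (∫ θ : E, ee θ • θ ∂μ) - ∫ θ : E, ee θ • θ ∂μ'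
        = ∫ p, (ee p.1 • p.1 - ee p.2 • p.2) ∂pl := by
      rw [integral_fst_eq hplf heevc.aestronglyMeasurable,
        integral_snd_eq hpls heevc.aestronglyMeasurable, ← integral_sub hv1 hv2]
    rw [hVdiff]
    calc ‖∫ p, (ee p.1 • p.1 - ee p.2 • p.2) ∂pl‖
        ≤ ∫ p, ‖ee p.1 • p.1 - ee p.2 • p.2‖ ∂pl :=
          norm_integral_le_integral_norm _
      _ ≤ ∫ p, g p * h p ∂pl := by
          refine integral_mono (hv1.sub hv2).norm hgh fun p => ?_
          have hd : ee p.1 • p.1 - ee p.2 • p.2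
              = ee p.1 • (p.1 - p.2) + (ee p.1 - ee p.2) • p.2 := by
            rw [smul_sub, sub_smul]; abel
          have habb : (‖p.1‖ + ‖p.2‖) * ‖p.2‖ ≤ 2*(1+‖p.1‖^2+‖p.2‖^2) := by
            nlinarith [sq_nonneg (‖p.1‖-‖p.2‖), sq_nonneg (‖p.2‖-1), sq_nonneg (‖p.1‖-1),
              norm_nonneg p.1, norm_nonneg p.2]
          have hmul := mul_le_mul_of_nonneg_right
            (mul_le_mul_of_nonneg_left habb hBpos.le) (hh0 p)
          calc ‖ee p.1 • p.1 - ee p.2 • p.2‖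
              ≤ ‖ee p.1 • (p.1 - p.2)‖ + ‖(ee p.1 - ee p.2) • p.2‖ := by
                rw [hd]; exact norm_add_le _ _
            _ = ee p.1 * ‖p.1 - p.2‖ + |ee p.1 - ee p.2| * ‖p.2‖ := by
                rw [norm_smul, norm_smul, Real.norm_of_nonneg (Real.exp_pos _).le,
                  Real.norm_eq_abs]
            _ ≤ eu * h p + (B * ((‖p.1‖ + ‖p.2‖) * h p)) * ‖p.2‖ := by
                refine add_le_add (mul_le_mul_of_nonneg_right (hup p.1) (norm_nonneg _)) ?_
                exact mul_le_mul_of_nonneg_right (hlip p.1 p.2) (norm_nonneg _)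
            _ ≤ g p * h p := by simp only [hg]; nlinarith [hmul, hh0 p, heu.le]
      _ ≤ _ := hDfull

private lemma integral_mix {w0 w1 : ℝ} (hw0 : 0 ≤ w0) (hw1 : 0 ≤ w1)
    {μ0 μ1 : Measure E} {G : Type*} [NormedAddCommGroup G] [NormedSpace ℝ G]
    {f : E → G} (h0 : Integrable f μ0) (h1 : Integrable f μ1) :
    ∫ θ, f θ ∂(ENNReal.ofReal w0 • μ0 + ENNReal.ofReal w1 • μ1)
      = w0 • ∫ θ, f θ ∂μ0 + w1 • ∫ θ, f θ ∂μ1 := by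
  rw [integral_add_measure (h0.smul_measure ENNReal.ofReal_ne_top)
    (h1.smul_measure ENNReal.ofReal_ne_top), integral_smul_measure, integral_smul_measure,
    ENNReal.toReal_ofReal hw0, ENNReal.toReal_ofReal hw1]

private lemma integrable_mix {w0 w1 : ℝ}
    {μ0 μ1 : Measure E} {G : Type*} [NormedAddCommGroup G]
    {f : E → G} (h0 : Integrable f μ0) (h1 : Integrable f μ1) :
    Integrable f (ENNReal.ofReal w0 • μ0 + ENNReal.ofReal w1 • μ1) :=
  (h0.smul_measure ENNReal.ofReal_ne_top).add_measure (h1.smul_measure ENNReal.ofReal_ne_top)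

private lemma prob_mix {w0 w1 : ℝ} (hw0 : 0 ≤ w0) (hw1 : 0 ≤ w1) (hsum : w0 + w1 = 1)
    {μ0 μ1 : Measure E} (h0 : IsProbabilityMeasure μ0) (h1 : IsProbabilityMeasure μ1) :
    IsProbabilityMeasure (ENNReal.ofReal w0 • μ0 + ENNReal.ofReal w1 • μ1) := by
  constructor
  simp [Measure.add_apply, Measure.smul_apply, smul_eq_mul, h0.measure_univ, h1.measure_univ,
    ← ENNReal.ofReal_add hw0 hw1, hsum]

private lemma meas_facts {α el eu K : ℝ} (hel : 0 < el) {L : E → ℝ} (hLc : Continuous L)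
    (hlow : ∀ θ : E, el ≤ Real.exp (-α * L θ)) (hup : ∀ θ : E, Real.exp (-α * L θ) ≤ eu)
    {μ : Measure E} [IsProbabilityMeasure μ]
    (hi : Integrable (fun θ : E => ‖θ‖ ^ 4) μ) (hk : ∫ θ : E, ‖θ‖ ^ 4 ∂μ ≤ K) :
    Integrable (fun θ : E => Real.exp (-α * L θ)) μ ∧
    Integrable (fun θ : E => Real.exp (-α * L θ) • θ) μ ∧
    el ≤ (∫ θ : E, Real.exp (-α * L θ) ∂μ) ∧
    ‖∫ θ : E, Real.exp (-α * L θ) • θ ∂μ‖ ≤ eu * (1 + K) := by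
  have heu : 0 < eu := (hel.trans_le (hlow 0)).trans_le (hup 0)
  have heec : Continuous (fun θ : E => Real.exp (-α * L θ)) :=
    Real.continuous_exp.comp (continuous_const.mul hLc)
  have h1 : Integrable (fun θ : E => Real.exp (-α * L θ)) μ :=
    integrable_of_bdd heec.aestronglyMeasurable (C := eu)
      (fun θ => by rw [Real.norm_of_nonneg (Real.exp_pos _).le]; exact hup θ)
  have hbint : Integrable (fun θ : E => eu * (1 + ‖θ‖ ^ 4)) μ :=
    ((integrable_const (1:ℝ)).add hi).const_mul eu
  have hptw : ∀ θ : E, ‖Real.exp (-α * L θ) • θ‖ ≤ eu * (1 + ‖θ‖ ^ 4) := fun θ => by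
    rw [norm_smul, Real.norm_of_nonneg (Real.exp_pos _).le]
    calc Real.exp (-α * L θ) * ‖θ‖ ≤ eu * ‖θ‖ :=
          mul_le_mul_of_nonneg_right (hup θ) (norm_nonneg θ)
      _ ≤ eu * (1 + ‖θ‖ ^ 4) :=
          mul_le_mul_of_nonneg_left (le_one_add_pow4 (norm_nonneg θ)) heu.le
  have h2 : Integrable (fun θ : E => Real.exp (-α * L θ) • θ) μ :=
    Integrable.mono' hbint (heec.smul continuous_id).aestronglyMeasurable
      (Eventually.of_forall hptw)
  refine ⟨h1, h2, ?_, ?_⟩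
  · have he : (el : ℝ) = ∫ _ : E, el ∂μ := by simp [measure_univ]
    rw [he]
    exact integral_mono (integrable_const el) h1 hlow
  · calc ‖∫ θ : E, Real.exp (-α * L θ) • θ ∂μ‖
        ≤ ∫ θ : E, ‖Real.exp (-α * L θ) • θ‖ ∂μ := norm_integral_le_integral_norm _
      _ ≤ ∫ θ : E, eu * (1 + ‖θ‖ ^ 4) ∂μ := integral_mono h2.norm hbint hptw
      _ = eu * (1 + ∫ θ : E, ‖θ‖ ^ 4 ∂μ) := by
          rw [integral_const_mul, integral_add (integrable_const 1) hi]
          simp [measure_univ]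
      _ ≤ eu * (1 + K) :=
          mul_le_mul_of_nonneg_left (by linarith [hk]) heu.le

private lemma quotient_diff {V : Type*} [NormedAddCommGroup V] [NormedSpace ℝ V]
    {a a' el R : ℝ} {u u' : V} (hel : 0 < el) (ha : el ≤ a) (ha' : el ≤ a')
    (hu' : ‖u'‖ ≤ R) (hR : 0 ≤ R) :
    ‖a⁻¹ • u - a'⁻¹ • u'‖ ≤ el⁻¹ * ‖u - u'‖ + el⁻¹ * el⁻¹ * R * |a - a'| := by
  have ha0 : 0 < a := hel.trans_le ha
  have ha0' : 0 < a' := hel.trans_le ha'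
  have hkey : a⁻¹ • u - a'⁻¹ • u' = a⁻¹ • (u - u') + (a⁻¹ - a'⁻¹) • u' := by
    rw [smul_sub, sub_smul]; abel
  have habs : |a⁻¹ - a'⁻¹| ≤ el⁻¹ * el⁻¹ * |a - a'| := by
    have hid : a⁻¹ - a'⁻¹ = (a' - a) * (a⁻¹ * a'⁻¹) := by
      field_simp
    rw [hid, abs_mul, abs_sub_comm, abs_of_nonneg (mul_nonneg (inv_nonneg.2 ha0.le) (inv_nonneg.2 ha0'.le))]
    have hle : a⁻¹ * a'⁻¹ ≤ el⁻¹ * el⁻¹ :=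
      mul_le_mul (inv_anti₀ hel ha) (inv_anti₀ hel ha')
        (by positivity) (by positivity)
    calc |a - a'| * (a⁻¹ * a'⁻¹) ≤ |a - a'| * (el⁻¹ * el⁻¹) :=
          mul_le_mul_of_nonneg_left hle (abs_nonneg _)
      _ = el⁻¹ * el⁻¹ * |a - a'| := by ring
  rw [hkey]
  have t1 : ‖a⁻¹ • (u - u')‖ ≤ el⁻¹ * ‖u - u'‖ := by
    rw [norm_smul, Real.norm_of_nonneg (inv_nonneg.2 ha0.le)]
    exact mul_le_mul_of_nonneg_right (inv_anti₀ hel ha) (norm_nonneg _)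
  have t2 : ‖(a⁻¹ - a'⁻¹) • u'‖ ≤ el⁻¹ * el⁻¹ * |a - a'| * R := by
    rw [norm_smul, Real.norm_eq_abs]
    exact mul_le_mul habs hu' (norm_nonneg _)
      (mul_nonneg (mul_nonneg (inv_nonneg.2 hel.le) (inv_nonneg.2 hel.le)) (abs_nonneg _))
  calc ‖a⁻¹ • (u - u') + (a⁻¹ - a'⁻¹) • u'‖
      ≤ ‖a⁻¹ • (u - u')‖ + ‖(a⁻¹ - a'⁻¹) • u'‖ := norm_add_le _ _
    _ ≤ el⁻¹ * ‖u - u'‖ + el⁻¹ * el⁻¹ * R * |a - a'| := by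
        have : el⁻¹ * el⁻¹ * |a - a'| * R = el⁻¹ * el⁻¹ * R * |a - a'| := by ring
        rw [this] at t2
        exact add_le_add t1 t2

private lemma key_est {α M el eu K w0 w1 : ℝ} (hα : 0 < α) (hM : 0 < M) (hel : 0 < el)
    (hK : 0 < K) (hw0 : 0 < w0) (hw1 : 0 < w1) (hwsum : w0 + w1 = 1)
    {L : E → ℝ} (hLc : Continuous L)
    (hlow : ∀ θ : E, el ≤ Real.exp (-α * L θ)) (hup : ∀ θ : E, Real.exp (-α * L θ) ≤ eu)
    (hlip : ∀ x y : E, |Real.exp (-α * L x) - Real.exp (-α * L y)| ≤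
      α * eu * M * ((‖x‖ + ‖y‖) * ‖x - y‖))
    {μ0 μ1 μ0' μ1' : Measure E} [IsProbabilityMeasure μ0] [IsProbabilityMeasure μ1]
    [IsProbabilityMeasure μ0'] [IsProbabilityMeasure μ1']
    (hi0 : Integrable (fun θ : E => ‖θ‖ ^ 4) μ0) (hk0 : ∫ θ : E, ‖θ‖ ^ 4 ∂μ0 ≤ K)
    (hi1 : Integrable (fun θ : E => ‖θ‖ ^ 4) μ1) (hk1 : ∫ θ : E, ‖θ‖ ^ 4 ∂μ1 ≤ K)
    (hi0' : Integrable (fun θ : E => ‖θ‖ ^ 4) μ0') (hk0' : ∫ θ : E, ‖θ‖ ^ 4 ∂μ0' ≤ K)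
    (hi1' : Integrable (fun θ : E => ‖θ‖ ^ 4) μ1') (hk1' : ∫ θ : E, ‖θ‖ ^ 4 ∂μ1' ≤ K)
    {pl0 pl1 : Measure (E × E)} [IsProbabilityMeasure pl0] [IsProbabilityMeasure pl1]
    (h0f : pl0.map Prod.fst = μ0) (h0s : pl0.map Prod.snd = μ0')
    (h1f : pl1.map Prod.fst = μ1) (h1s : pl1.map Prod.snd = μ1') :
    ‖consensusPoint α L (ENNReal.ofReal w0 • μ0 + ENNReal.ofReal w1 • μ1) -
     consensusPoint α L (ENNReal.ofReal w0 • μ0' + ENNReal.ofReal w1 • μ1')‖ ≤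
    ((el⁻¹ + el⁻¹ * el⁻¹ * (eu * (1 + K))) * Real.sqrt (2*eu^2 + 24*(α*eu*M)^2*(1+2*K))) *
      (w0 * (∫ p, ‖p.1 - p.2‖ ^ 2 ∂pl0) ^ (1/2:ℝ) +
       w1 * (∫ p, ‖p.1 - p.2‖ ^ 2 ∂pl1) ^ (1/2:ℝ)) := by
  have heu : 0 < eu := (hel.trans_le (hlow 0)).trans_le (hup 0)
  set D : ℝ := Real.sqrt (2*eu^2 + 24*(α*eu*M)^2*(1+2*K)) with hD
  have hDpos : 0 < D := Real.sqrt_pos.2 (by positivity)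
  set c0 : ℝ := (∫ p, ‖p.1 - p.2‖ ^ 2 ∂pl0) ^ (1/2:ℝ) with hc0
  set c1 : ℝ := (∫ p, ‖p.1 - p.2‖ ^ 2 ∂pl1) ^ (1/2:ℝ) with hc1
  have hc0n : 0 ≤ c0 := Real.rpow_nonneg (integral_nonneg fun p => by positivity) _
  have hc1n : 0 ≤ c1 := Real.rpow_nonneg (integral_nonneg fun p => by positivity) _
  set ν : Measure E := ENNReal.ofReal w0 • μ0 + ENNReal.ofReal w1 • μ1 with hν
  set ν' : Measure E := ENNReal.ofReal w0 • μ0' + ENNReal.ofReal w1 • μ1' with hν'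
  haveI hpν : IsProbabilityMeasure ν := prob_mix hw0.le hw1.le hwsum inferInstance inferInstance
  haveI hpν' : IsProbabilityMeasure ν' := prob_mix hw0.le hw1.le hwsum inferInstance inferInstance
  obtain ⟨he0, hv0, -, -⟩ := meas_facts hel hLc hlow hup hi0 hk0
  obtain ⟨he1, hv1, -, -⟩ := meas_facts hel hLc hlow hup hi1 hk1
  obtain ⟨he0', hv0', -, -⟩ := meas_facts hel hLc hlow hup hi0' hk0'
  obtain ⟨he1', hv1', -, -⟩ := meas_facts hel hLc hlow hup hi1' hk1'
  -- moments of the mixtures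
  have hiν : Integrable (fun θ : E => ‖θ‖ ^ 4) ν := integrable_mix hi0 hi1
  have hiν' : Integrable (fun θ : E => ‖θ‖ ^ 4) ν' := integrable_mix hi0' hi1'
  have hkν : ∫ θ : E, ‖θ‖ ^ 4 ∂ν ≤ K := by
    rw [hν, integral_mix hw0.le hw1.le hi0 hi1]
    simp only [smul_eq_mul]
    nlinarith [mul_le_mul_of_nonneg_left hk0 hw0.le, mul_le_mul_of_nonneg_left hk1 hw1.le]
  have hkν' : ∫ θ : E, ‖θ‖ ^ 4 ∂ν' ≤ K := by
    rw [hν', integral_mix hw0.le hw1.le hi0' hi1']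
    simp only [smul_eq_mul]
    nlinarith [mul_le_mul_of_nonneg_left hk0' hw0.le, mul_le_mul_of_nonneg_left hk1' hw1.le]
  obtain ⟨heν, hvν, hIν, hJν⟩ := meas_facts hel hLc hlow hup hiν hkν
  obtain ⟨heν', hvν', hIν', hJν'⟩ := meas_facts hel hLc hlow hup hiν' hkν'
  -- per-component coupling estimates
  obtain ⟨hI0, hJ0⟩ := coupling_est hα hM hel hK hLc hlow hup hlip hi0 hk0 hi0' hk0' h0f h0s
  obtain ⟨hI1, hJ1⟩ := coupling_est hα hM hel hK hLc hlow hup hlip hi1 hk1 hi1' hk1' h1f h1s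
  -- mixture differences
  have hImix : |(∫ θ : E, Real.exp (-α * L θ) ∂ν) - ∫ θ : E, Real.exp (-α * L θ) ∂ν'|
      ≤ D * (w0 * c0 + w1 * c1) := by
    rw [hν, hν', integral_mix hw0.le hw1.le he0 he1, integral_mix hw0.le hw1.le he0' he1']
    simp only [smul_eq_mul]
    have e1 : w0 * (∫ θ : E, Real.exp (-α * L θ) ∂μ0) + w1 * (∫ θ : E, Real.exp (-α * L θ) ∂μ1)
        - (w0 * (∫ θ : E, Real.exp (-α * L θ) ∂μ0') + w1 * (∫ θ : E, Real.exp (-α * L θ) ∂μ1'))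
        = w0 * ((∫ θ : E, Real.exp (-α * L θ) ∂μ0) - ∫ θ : E, Real.exp (-α * L θ) ∂μ0')
        + w1 * ((∫ θ : E, Real.exp (-α * L θ) ∂μ1) - ∫ θ : E, Real.exp (-α * L θ) ∂μ1') := by
      ring
    rw [e1]
    calc |_| ≤ |w0 * ((∫ θ : E, Real.exp (-α * L θ) ∂μ0) - ∫ θ : E, Real.exp (-α * L θ) ∂μ0')|
        + |w1 * ((∫ θ : E, Real.exp (-α * L θ) ∂μ1) - ∫ θ : E, Real.exp (-α * L θ) ∂μ1')| :=
          abs_add_le _ _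
      _ ≤ w0 * (D * c0) + w1 * (D * c1) := by
          rw [abs_mul, abs_mul, abs_of_pos hw0, abs_of_pos hw1]
          exact add_le_add (mul_le_mul_of_nonneg_left hI0 hw0.le)
            (mul_le_mul_of_nonneg_left hI1 hw1.le)
      _ = D * (w0 * c0 + w1 * c1) := by ring
  have hJmix : ‖(∫ θ : E, Real.exp (-α * L θ) • θ ∂ν) - ∫ θ : E, Real.exp (-α * L θ) • θ ∂ν'‖
      ≤ D * (w0 * c0 + w1 * c1) := by
    rw [hν, hν', integral_mix hw0.le hw1.le hv0 hv1, integral_mix hw0.le hw1.le hv0' hv1']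
    have e1 : w0 • (∫ θ : E, Real.exp (-α * L θ) • θ ∂μ0)
        + w1 • (∫ θ : E, Real.exp (-α * L θ) • θ ∂μ1)
        - (w0 • (∫ θ : E, Real.exp (-α * L θ) • θ ∂μ0')
          + w1 • (∫ θ : E, Real.exp (-α * L θ) • θ ∂μ1'))
        = w0 • ((∫ θ : E, Real.exp (-α * L θ) • θ ∂μ0) - ∫ θ : E, Real.exp (-α * L θ) • θ ∂μ0')
        + w1 • ((∫ θ : E, Real.exp (-α * L θ) • θ ∂μ1)
            - ∫ θ : E, Real.exp (-α * L θ) • θ ∂μ1') := by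
      rw [smul_sub, smul_sub]; abel
    rw [e1]
    calc ‖_‖ ≤ ‖w0 • ((∫ θ : E, Real.exp (-α * L θ) • θ ∂μ0)
          - ∫ θ : E, Real.exp (-α * L θ) • θ ∂μ0')‖
        + ‖w1 • ((∫ θ : E, Real.exp (-α * L θ) • θ ∂μ1)
          - ∫ θ : E, Real.exp (-α * L θ) • θ ∂μ1')‖ := norm_add_le _ _
      _ ≤ w0 * (D * c0) + w1 * (D * c1) := by
          rw [norm_smul, norm_smul, Real.norm_of_nonneg hw0.le, Real.norm_of_nonneg hw1.le]
          exact add_le_add (mul_le_mul_of_nonneg_left hJ0 hw0.le)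
            (mul_le_mul_of_nonneg_left hJ1 hw1.le)
      _ = D * (w0 * c0 + w1 * c1) := by ring
  -- assemble
  have hmain := quotient_diff (u := ∫ θ : E, Real.exp (-α * L θ) • θ ∂ν)
    hel hIν hIν' hJν' (by positivity)
  have hfinal : ‖consensusPoint α L ν - consensusPoint α L ν'‖ ≤
      el⁻¹ * (D * (w0 * c0 + w1 * c1))
      + el⁻¹ * el⁻¹ * (eu * (1 + K)) * (D * (w0 * c0 + w1 * c1)) := by
    refine le_trans ?_ (add_le_add (mul_le_mul_of_nonneg_left hJmix (by positivity))
      (mul_le_mul_of_nonneg_left hImix (by positivity)))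
    simpa [consensusPoint] using hmain
  calc ‖consensusPoint α L ν - consensusPoint α L ν'‖
      ≤ el⁻¹ * (D * (w0 * c0 + w1 * c1))
        + el⁻¹ * el⁻¹ * (eu * (1 + K)) * (D * (w0 * c0 + w1 * c1)) := hfinal
    _ = ((el⁻¹ + el⁻¹ * el⁻¹ * (eu * (1 + K))) * D) * (w0 * c0 + w1 * c1) := by ring

private lemma le_inf_combo {X C w0 w1 : ℝ} {S0 S1 : Set ℝ} (hC : 0 < C)
    (hw0 : 0 < w0) (hw1 : 0 < w1) (h0 : S0.Nonempty) (h1 : S1.Nonempty)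
    (H : ∀ c0 ∈ S0, ∀ c1 ∈ S1, X ≤ C * (w0 * c0 + w1 * c1)) :
    X ≤ C * (w0 * sInf S0 + w1 * sInf S1) := by
  refine le_of_forall_pos_le_add fun ε hε => ?_
  obtain ⟨a0, ha0, hlt0⟩ := Real.lt_sInf_add_pos h0 (show 0 < ε/(2*C*w0) by positivity)
  obtain ⟨a1, ha1, hlt1⟩ := Real.lt_sInf_add_pos h1 (show 0 < ε/(2*C*w1) by positivity)
  have hX := H a0 ha0 a1 ha1
  have m0 := mul_le_mul_of_nonneg_left hlt0.le (by positivity : (0:ℝ) ≤ C * w0)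
  have m1 := mul_le_mul_of_nonneg_left hlt1.le (by positivity : (0:ℝ) ≤ C * w1)
  have e0 : C * w0 * (sInf S0 + ε/(2*C*w0)) = C * w0 * sInf S0 + ε/2 := by
    field_simp
  have e1 : C * w1 * (sInf S1 + ε/(2*C*w1)) = C * w1 * sInf S1 + ε/2 := by
    field_simp
  rw [e0] at m0
  rw [e1] at m1
  nlinarith [m0, m1, hX]

/-- stability of the consensus points along curves of measures:
under Assumption 1 and boundedness from above of `L₁, L₂`, and uniform fourth-moment
bounds on the continuous curves `ν¹, ν²`, there is a constant `C > 0` such that for all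
`s, t ∈ (0,T)` and `k = 1, 2`,
`|m_{L_k}^α[ν_t] - m_{L_k}^α[ν_s]| ≤ C (w₁ W₂(ν_t¹, ν_s¹) + w₂ W₂(ν_t², ν_s²))`. -/
theorem consensusPoint_stability_in_time {d : ℕ} (T α K : ℝ)
    (hT : 0 < T) (hα : 0 < α) (hK : 0 < K)
    (L : Fin 2 → EuclideanSpace ℝ (Fin d) → ℝ)
    (ML CL MgL CgL : Fin 2 → ℝ)
    (hA : ∀ k, Assumption1 (L k) (ML k) (CL k) (MgL k) (CgL k))
    (hbddAbove : ∀ k, BddAbove (Set.range (L k)))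
    (w : Fin 2 → ℝ) (hw : ∀ k, 0 < w k) (hwsum : w 0 + w 1 = 1)
    (ν : Fin 2 → ℝ → Measure (EuclideanSpace ℝ (Fin d)))
    (hprob : ∀ k, ∀ t ∈ Set.Icc (0:ℝ) T, IsProbabilityMeasure (ν k t))
    (hcont : ∀ k (f : BoundedContinuousFunction (EuclideanSpace ℝ (Fin d)) ℝ),
      ContinuousOn (fun t => ∫ θ, f θ ∂(ν k t)) (Set.Icc (0:ℝ) T))
    (hmom : ∀ k, ∀ t ∈ Set.Icc (0:ℝ) T, Integrable (fun θ => ‖θ‖ ^ 4) (ν k t))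
    (hmomK : ∀ k, ∀ t ∈ Set.Icc (0:ℝ) T, ∫ θ, ‖θ‖ ^ 4 ∂(ν k t) ≤ K) :
    ∃ C > 0, ∀ s ∈ Set.Ioo (0:ℝ) T, ∀ t ∈ Set.Ioo (0:ℝ) T, ∀ k : Fin 2,
      ‖consensusPoint α (L k) (mix2 w ν t) - consensusPoint α (L k) (mix2 w ν s)‖ ≤
        C * (w 0 * W2 (ν 0 t) (ν 0 s) + w 1 * W2 (ν 1 t) (ν 1 s)) := by
  classical
  have key : ∀ k : Fin 2, ∃ Ck : ℝ, 0 < Ck ∧ ∀ s ∈ Set.Icc (0:ℝ) T, ∀ t ∈ Set.Icc (0:ℝ) T,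
      ∀ (pl0 pl1 : Measure (EuclideanSpace ℝ (Fin d) × EuclideanSpace ℝ (Fin d))),
      IsProbabilityMeasure pl0 → IsProbabilityMeasure pl1 →
      pl0.map Prod.fst = ν 0 t → pl0.map Prod.snd = ν 0 s →
      pl1.map Prod.fst = ν 1 t → pl1.map Prod.snd = ν 1 s →
      ‖consensusPoint α (L k) (mix2 w ν t) - consensusPoint α (L k) (mix2 w ν s)‖ ≤
        Ck * (w 0 * (∫ p, ‖p.1 - p.2‖ ^ 2 ∂pl0) ^ (1/2:ℝ) +
              w 1 * (∫ p, ‖p.1 - p.2‖ ^ 2 ∂pl1) ^ (1/2:ℝ)) := by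
    intro k
    set ll : ℝ := sInf (Set.range (L k)) with hll
    set bb : ℝ := sSup (Set.range (L k)) with hbb
    refine ⟨((Real.exp (-α * bb))⁻¹ + (Real.exp (-α * bb))⁻¹ * (Real.exp (-α * bb))⁻¹ *
        (Real.exp (-α * ll) * (1 + K))) *
        Real.sqrt (2*(Real.exp (-α * ll))^2 + 24*(α*(Real.exp (-α * ll))*(ML k))^2*(1+2*K)),
        ?_, ?_⟩
    · have h2 : 0 < 2*(Real.exp (-α * ll))^2 + 24*(α*(Real.exp (-α * ll))*(ML k))^2*(1+2*K) := by
        nlinarith [Real.exp_pos (-α * ll), sq_nonneg (Real.exp (-α * ll)),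
          mul_nonneg (sq_nonneg (α*(Real.exp (-α * ll))*(ML k))) (by linarith : (0:ℝ) ≤ 1+2*K)]
      have h3 := Real.sqrt_pos.2 h2
      have h4 : 0 < (Real.exp (-α * bb))⁻¹ := by positivity
      have h5 : 0 < Real.exp (-α * ll) * (1 + K) :=
        mul_pos (Real.exp_pos _) (by linarith)
      nlinarith [mul_pos h4 h3, mul_pos (mul_pos (mul_pos h4 h4) h5) h3]
    · intro s hsI t htI pl0 pl1 hp0 hp1 h0f h0s h1f h1s
      haveI := hp0; haveI := hp1
      haveI := hprob 0 t htI; haveI := hprob 1 t htI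
      haveI := hprob 0 s hsI; haveI := hprob 1 s hsI
      have hLc : Continuous (L k) := (hA k).differentiable.continuous
      have hlow : ∀ θ : EuclideanSpace ℝ (Fin d),
          Real.exp (-α * bb) ≤ Real.exp (-α * L k θ) := fun θ => by
        apply Real.exp_le_exp.2
        rw [hbb]
        have h := le_csSup (hbddAbove k) (Set.mem_range_self θ)
        nlinarith [mul_nonneg hα.le (sub_nonneg.2 h)]
      have hup : ∀ θ : EuclideanSpace ℝ (Fin d),
          Real.exp (-α * L k θ) ≤ Real.exp (-α * ll) := fun θ => by
        apply Real.exp_le_exp.2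
        rw [hll]
        have h := csInf_le (hA k).bddBelow (Set.mem_range_self θ)
        nlinarith [mul_nonneg hα.le (sub_nonneg.2 h)]
      have hlip : ∀ x y : EuclideanSpace ℝ (Fin d),
          |Real.exp (-α * L k x) - Real.exp (-α * L k y)| ≤
          α * (Real.exp (-α * ll)) * ML k * ((‖x‖ + ‖y‖) * ‖x - y‖) := by
        intro x y
        have hx : -α * L k x ≤ -α * ll := by
          rw [hll]
          have h := csInf_le (hA k).bddBelow (Set.mem_range_self x)
          nlinarith [mul_nonneg hα.le (sub_nonneg.2 h)]
        have hy : -α * L k y ≤ -α * ll := by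
          rw [hll]
          have h := csInf_le (hA k).bddBelow (Set.mem_range_self y)
          nlinarith [mul_nonneg hα.le (sub_nonneg.2 h)]
        have h1 := exp_lip hx hy
        have h2 : |(-α * L k x) - (-α * L k y)| = α * |L k x - L k y| := by
          rw [show (-α * L k x) - (-α * L k y) = α * (L k y - L k x) by ring, abs_mul,
            abs_of_pos hα, abs_sub_comm]
        rw [h2] at h1
        have h3 := (hA k).locLip x y
        calc |Real.exp (-α * L k x) - Real.exp (-α * L k y)|
            ≤ Real.exp (-α * ll) * (α * |L k x - L k y|) := h1
          _ ≤ Real.exp (-α * ll) * (α * (ML k * (‖x‖ + ‖y‖) * ‖x - y‖)) := by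
              refine mul_le_mul_of_nonneg_left
                (mul_le_mul_of_nonneg_left h3 hα.le) (Real.exp_pos _).le
          _ = α * (Real.exp (-α * ll)) * ML k * ((‖x‖ + ‖y‖) * ‖x - y‖) := by ring
      have hres := key_est hα (hA k).ML_pos (Real.exp_pos (-α * bb)) hK (hw 0) (hw 1) hwsum
        hLc hlow hup hlip (hmom 0 t htI) (hmomK 0 t htI) (hmom 1 t htI) (hmomK 1 t htI)
        (hmom 0 s hsI) (hmomK 0 s hsI) (hmom 1 s hsI) (hmomK 1 s hsI) h0f h0s h1f h1s
      simpa only [mix2] using hres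
  obtain ⟨C0, hC0pos, H0⟩ := key 0
  obtain ⟨C1, hC1pos, H1⟩ := key 1
  refine ⟨max C0 C1, lt_max_of_lt_left hC0pos, ?_⟩
  intro s hs t ht k
  have hsI : s ∈ Set.Icc (0:ℝ) T := Set.Ioo_subset_Icc_self hs
  have htI : t ∈ Set.Icc (0:ℝ) T := Set.Ioo_subset_Icc_self ht
  haveI := hprob 0 t htI; haveI := hprob 1 t htI
  haveI := hprob 0 s hsI; haveI := hprob 1 s hsI
  set S0 : Set ℝ := {c : ℝ |
    ∃ pl : Measure (EuclideanSpace ℝ (Fin d) × EuclideanSpace ℝ (Fin d)),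
    IsProbabilityMeasure pl ∧ pl.map Prod.fst = ν 0 t ∧ pl.map Prod.snd = ν 0 s ∧
    c = (∫ p, ‖p.1 - p.2‖ ^ 2 ∂pl) ^ (1/2 : ℝ)} with hS0
  set S1 : Set ℝ := {c : ℝ |
    ∃ pl : Measure (EuclideanSpace ℝ (Fin d) × EuclideanSpace ℝ (Fin d)),
    IsProbabilityMeasure pl ∧ pl.map Prod.fst = ν 1 t ∧ pl.map Prod.snd = ν 1 s ∧
    c = (∫ p, ‖p.1 - p.2‖ ^ 2 ∂pl) ^ (1/2 : ℝ)} with hS1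
  have hne0 : S0.Nonempty := by
    refine ⟨_, ⟨(ν 0 t).prod (ν 0 s), inferInstance, ?_, ?_, rfl⟩⟩
    · simp [measure_univ]
    · simp [measure_univ]
  have hne1 : S1.Nonempty := by
    refine ⟨_, ⟨(ν 1 t).prod (ν 1 s), inferInstance, ?_, ?_, rfl⟩⟩
    · simp [measure_univ]
    · simp [measure_univ]
  have H : ∀ c0 ∈ S0, ∀ c1 ∈ S1,
      ‖consensusPoint α (L k) (mix2 w ν t) - consensusPoint α (L k) (mix2 w ν s)‖ ≤
        (max C0 C1) * (w 0 * c0 + w 1 * c1) := by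
    rintro c0 ⟨pl0, hp0, h0f, h0s, rfl⟩ c1 ⟨pl1, hp1, h1f, h1s, rfl⟩
    have h0n : (0:ℝ) ≤ (∫ p, ‖p.1 - p.2‖ ^ 2 ∂pl0) ^ (1/2:ℝ) :=
      Real.rpow_nonneg (integral_nonneg fun p => by positivity) _
    have h1n : (0:ℝ) ≤ (∫ p, ‖p.1 - p.2‖ ^ 2 ∂pl1) ^ (1/2:ℝ) :=
      Real.rpow_nonneg (integral_nonneg fun p => by positivity) _
    have hsum : (0:ℝ) ≤ w 0 * (∫ p, ‖p.1 - p.2‖ ^ 2 ∂pl0) ^ (1/2:ℝ) +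
        w 1 * (∫ p, ‖p.1 - p.2‖ ^ 2 ∂pl1) ^ (1/2:ℝ) :=
      add_nonneg (mul_nonneg (hw 0).le h0n) (mul_nonneg (hw 1).le h1n)
    fin_cases k
    · exact (H0 s hsI t htI pl0 pl1 hp0 hp1 h0f h0s h1f h1s).trans
        (mul_le_mul_of_nonneg_right (le_max_left _ _) hsum)
    · exact (H1 s hsI t htI pl0 pl1 hp0 hp1 h0f h0s h1f h1s).trans
        (mul_le_mul_of_nonneg_right (le_max_right _ _) hsum)
  have := le_inf_combo (lt_max_of_lt_left hC0pos) (hw 0) (hw 1) hne0 hne1 H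
  exact this
end
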